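/- Let K: [0,∞) → [0,∞) be a continuous nondecreasing function with K_0 = 0 and K_t → ∞ as t → ∞. Let a, β, σ > 0 with 1/2 < r < 1, and set β_t = aβ(1+K_t)^{−r}, ℓ_t = aσ(1+K_t)^{−r}, Γ_t = exp(∫₀ᵗ β_s dK_s), ⟨L⟩_t = 1 + ∫₀ᵗ Γ_s² ℓ_s² dK_s, and ε_t^{(1)} = 1 + ∫₀ᵗ β_s Γ_s² ⟨L⟩_s^{−1} dK_s. Then: (i) Γ_t² / ( ⟨L⟩_t (1+K_t)^r ) → 2β/(aσ²) as t → ∞; and (ii) ε_t^{(1)} / (1+K_t) → 2β²/σ² as t → ∞. -/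

import Mathlib

open MeasureTheory Set Filter Topology

/-- `Γ_t = exp(∫₀ᵗ β_s dK_s)`. -/
noncomputable def Gam (K : StieltjesFunction ℝ) (β : ℝ → ℝ) (t : ℝ) : ℝ :=
  Real.exp (∫ s in Ioc 0 t, β s ∂K.measure)

/-- `⟨L⟩_t = 1 + ∫₀ᵗ Γ_s² ℓ_s² dK_s`. -/
noncomputable def angL (K : StieltjesFunction ℝ) (β ℓ : ℝ → ℝ) (t : ℝ) : ℝ :=
  1 + ∫ s in Ioc 0 t, (Gam K β s) ^ 2 * ℓ s ^ 2 ∂K.measure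

/-- `ε_t^{(1)} = 1 + ∫₀ᵗ β_s Γ_s² ⟨L⟩_s^{−1} dK_s`. -/
noncomputable def epsOne (K : StieltjesFunction ℝ) (β ℓ : ℝ → ℝ) (t : ℝ) : ℝ :=
  1 + ∫ s in Ioc 0 t, β s * (Gam K β s) ^ 2 * (angL K β ℓ s)⁻¹ ∂K.measure

lemma hitK (K : StieltjesFunction ℝ) (hKc : Continuous fun x => K x) (hK0 : K 0 = 0)
    (hKtop : Tendsto (fun t => K t) atTop atTop) (y : ℝ) (hy : 0 ≤ y) :
    ∃ u, 0 ≤ u ∧ K u = y ∧ ∀ s, K s ≤ y ↔ s ≤ u := by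
  set S := {s : ℝ | K s ≤ y} with hS
  have h0S : (0:ℝ) ∈ S := by simp [hS, hK0, hy]
  have hbdd : BddAbove S := by
    obtain ⟨M, hM⟩ := eventually_atTop.1 (hKtop.eventually_gt_atTop y)
    exact ⟨M, fun s hs => le_of_not_gt fun h => absurd hs (hM s h.le).not_ge⟩
  have hclosed : IsClosed S := isClosed_le hKc continuous_const
  set u := sSup S with hu
  have huS : u ∈ S := hclosed.csSup_mem ⟨0, h0S⟩ hbdd
  have hu0 : 0 ≤ u := le_csSup hbdd h0S
  have hiff : ∀ s, K s ≤ y ↔ s ≤ u :=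
    fun s => ⟨fun h => le_csSup hbdd h, fun h => le_trans (K.mono h) huS⟩
  have hKu : K u = y := by
    refine le_antisymm huS ?_
    have h1 : ∀ s, s > u → y ≤ K s := fun s hs =>
      (lt_of_not_ge fun h => ((hiff s).1 h).not_gt hs).le
    exact ge_of_tendsto (hKc.continuousAt.tendsto.mono_left nhdsWithin_le_nhds :
        Tendsto _ (𝓝[>] u) (𝓝 (K u)))
      (eventually_nhdsWithin_of_forall fun s hs => h1 s hs)
  exact ⟨u, hu0, hKu, hiff⟩


lemma mapK (K : StieltjesFunction ℝ) (hKc : Continuous fun x => K x) (hK0 : K 0 = 0)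
    (hKtop : Tendsto (fun t => K t) atTop atTop) (t : ℝ) (ht : 0 ≤ t) :
    Measure.map (fun x => K x) (K.measure.restrict (Ioc 0 t)) = volume.restrict (Ioc 0 (K t)) := by
  have hKm : Measurable fun x => K x := hKc.measurable
  have hKt0 : 0 ≤ K t := hK0 ▸ K.mono ht
  have hKnn : ∀ s : ℝ, 0 < s → 0 ≤ K s := fun s hs => hK0 ▸ K.mono hs.le
  have key : ∀ c d : ℝ, Measure.map (fun x => K x) (K.measure.restrict (Ioc 0 t)) (Ioc c d)
      = volume.restrict (Ioc 0 (K t)) (Ioc c d) := by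
    intro c d
    rw [Measure.map_apply hKm measurableSet_Ioc, Measure.restrict_apply (hKm measurableSet_Ioc),
      Measure.restrict_apply measurableSet_Ioc, Ioc_inter_Ioc, Real.volume_Ioc]
    rcases lt_or_ge d 0 with hd | hd
    · have he : (fun x => K x) ⁻¹' Ioc c d ∩ Ioc 0 t = (∅ : Set ℝ) := by
        ext s
        simp only [mem_inter_iff, mem_preimage, mem_Ioc, mem_empty_iff_false, iff_false]
        rintro ⟨⟨-, h2⟩, h3, -⟩
        exact absurd (le_trans (hKnn s h3) h2) hd.not_ge
      rw [he, measure_empty]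
      symm
      rw [ENNReal.ofReal_eq_zero]
      have : min d (K t) ≤ d := min_le_left _ _
      nlinarith [le_max_right c (0:ℝ), le_max_left c (0:ℝ)]
    · obtain ⟨ud, hud0, hKud, hiffd⟩ := hitK K hKc hK0 hKtop d hd
      rcases lt_or_ge c 0 with hc | hc
      · have he : (fun x => K x) ⁻¹' Ioc c d ∩ Ioc 0 t = Ioc 0 (min ud t) := by
          ext s
          simp only [mem_inter_iff, mem_preimage, mem_Ioc, lt_min_iff, le_min_iff]
          constructor
          · rintro ⟨⟨-, h2⟩, h3, h4⟩
            exact ⟨h3, (hiffd s).1 h2, h4⟩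
          · rintro ⟨h1, h2, h3⟩
            exact ⟨⟨lt_of_lt_of_le hc (hKnn s h1), (hiffd s).2 h2⟩, h1, h3⟩
        rw [he, StieltjesFunction.measure_Ioc, hK0, K.mono.map_min, hKud]
        rw [max_eq_right hc.le]
      · obtain ⟨uc, huc0, hKuc, hiffc⟩ := hitK K hKc hK0 hKtop c hc
        have he : (fun x => K x) ⁻¹' Ioc c d ∩ Ioc 0 t = Ioc uc (min ud t) := by
          ext s
          simp only [mem_inter_iff, mem_preimage, mem_Ioc, le_min_iff]
          constructor
          · rintro ⟨⟨h1, h2⟩, h3, h4⟩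
            refine ⟨?_, (hiffd s).1 h2, h4⟩
            by_contra h
            exact absurd ((hiffc s).2 (not_lt.1 h)) (not_le.2 h1)
          · rintro ⟨h1, h2, h3⟩
            refine ⟨⟨?_, (hiffd s).2 h2⟩, lt_of_le_of_lt huc0 h1, h3⟩
            by_contra h
            exact absurd ((hiffc s).1 (not_lt.1 h)) (not_le.2 h1)
        rw [he, StieltjesFunction.measure_Ioc, K.mono.map_min, hKud, hKuc,
          max_eq_left hc]
  exact Measure.ext_of_Ioc' _ _
    (fun c d _ => by
      rw [key c d, Measure.restrict_apply measurableSet_Ioc, Ioc_inter_Ioc, Real.volume_Ioc]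
      exact ENNReal.ofReal_ne_top)
    (fun c d _ => key c d)

section LH
open intervalIntegral in

lemma lhopital_aux {A N A' N' : ℝ → ℝ} {L x₁ : ℝ}
    (hA : ∀ x, x₁ < x → HasDerivAt A (A' x) x)
    (hN : ∀ x, x₁ < x → HasDerivAt N (N' x) x)
    (hA'c : ContinuousOn A' (Ioi x₁)) (hN'c : ContinuousOn N' (Ioi x₁))
    (hN'pos : ∀ x, x₁ < x → 0 < N' x)
    (hNtop : Tendsto N atTop atTop)
    (hratio : Tendsto (fun x => A' x / N' x) atTop (𝓝 L)) :
    Tendsto (fun x => A x / N x) atTop (𝓝 L) := by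
  rw [Metric.tendsto_nhds]
  intro ε hε
  set δ := ε / 2 with hδ
  have hδ0 : 0 < δ := by positivity
  obtain ⟨x₀, hx₀⟩ := eventually_atTop.1
    ((hratio.eventually (Metric.ball_mem_nhds L hδ0)).and (eventually_gt_atTop x₁))
  have hx₀1 : x₁ < x₀ := (hx₀ x₀ le_rfl).2
  -- key bound for x ≥ x₀
  have key : ∀ x, x₀ ≤ x → |A x - L * N x - (A x₀ - L * N x₀)| ≤ δ * (N x - N x₀) := by
    intro x hx
    have hsub : Icc x₀ x ⊆ Ioi x₁ := fun u hu => lt_of_lt_of_le hx₀1 hu.1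
    have hAint : IntervalIntegrable A' volume x₀ x :=
      (hA'c.mono hsub).intervalIntegrable_of_Icc hx
    have hNint : IntervalIntegrable N' volume x₀ x :=
      (hN'c.mono hsub).intervalIntegrable_of_Icc hx
    have hAeq : ∫ u in x₀..x, A' u = A x - A x₀ := by
      refine intervalIntegral.integral_eq_sub_of_hasDerivAt (fun u hu => ?_) hAint
      rw [uIcc_of_le hx] at hu
      exact hA u (hsub hu)
    have hNeq : ∫ u in x₀..x, N' u = N x - N x₀ := by
      refine intervalIntegral.integral_eq_sub_of_hasDerivAt (fun u hu => ?_) hNint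
      rw [uIcc_of_le hx] at hu
      exact hN u (hsub hu)
    have hptwise : ∀ u ∈ Icc x₀ x, |A' u - L * N' u| ≤ δ * N' u := by
      intro u hu
      have hu1 : x₁ < u := hsub hu
      have hN'u : 0 < N' u := hN'pos u hu1
      have := (hx₀ u hu.1).1
      rw [Real.dist_eq] at this
      have h2 : |A' u / N' u - L| ≤ δ := this.le
      have heq : |A' u - L * N' u| = |A' u / N' u - L| * N' u := by
        rw [show A' u - L * N' u = (A' u / N' u - L) * N' u by field_simp, abs_mul,
          abs_of_pos hN'u]
      rw [heq]
      exact mul_le_mul_of_nonneg_right h2 hN'u.le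
    have habs : |∫ u in x₀..x, (A' u - L * N' u)| ≤ ∫ u in x₀..x, δ * N' u := by
      refine (intervalIntegral.abs_integral_le_integral_abs hx).trans ?_
      refine intervalIntegral.integral_mono_on hx ((hAint.sub (hNint.const_mul L)).abs) 
        (hNint.const_mul δ) hptwise
    rw [intervalIntegral.integral_sub hAint (hNint.const_mul L),
      intervalIntegral.integral_const_mul, hAeq, hNeq,
      intervalIntegral.integral_const_mul, hNeq] at habs
    calc |A x - L * N x - (A x₀ - L * N x₀)| 
        = |(A x - A x₀) - L * (N x - N x₀)| := by ring_nf
      _ ≤ δ * (N x - N x₀) := habs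
  set C := |A x₀ - L * N x₀| + δ * |N x₀| + 1 with hC
  have hC0 : 0 < C := by positivity
  have hev : ∀ᶠ x in atTop, x₀ ≤ x ∧ C / δ < N x :=
    (eventually_ge_atTop x₀).and (hNtop.eventually_gt_atTop (C / δ))
  filter_upwards [hev] with x ⟨hx, hNx⟩
  have hNx0 : 0 < N x := lt_trans (by positivity) hNx
  have h1 := key x hx
  rw [Real.dist_eq]
  rw [show A x / N x - L = (A x - L * N x) / N x by field_simp, abs_div, abs_of_pos hNx0]
  have h2 : |A x - L * N x| ≤ |A x₀ - L * N x₀| + δ * (N x - N x₀) := by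
    have := abs_sub_abs_le_abs_sub (A x - L * N x) (A x₀ - L * N x₀)
    linarith [h1, abs_nonneg (A x₀ - L * N x₀)]
  have h3 : δ * (N x - N x₀) ≤ δ * N x + δ * |N x₀| := by
    have := neg_abs_le (N x₀); nlinarith
  have h4 : |A x - L * N x| ≤ C - 1 + δ * N x := by
    rw [hC]; linarith
  have h5 : (C - 1 + δ * N x) / N x < ε := by
    rw [div_lt_iff₀ hNx0]
    have h6 : C < δ * N x := by
      rw [div_lt_iff₀ hδ0] at hNx; linarith [mul_comm δ (N x)]
    have : δ + δ = ε := by rw [hδ]; ring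
    nlinarith
  calc |A x - L * N x| / N x ≤ (C - 1 + δ * N x) / N x := by gcongr
    _ < ε := h5

end LH

noncomputable def Gaux (a b r u : ℝ) : ℝ :=
  Real.exp (a * b / (1 - r) * ((1 + u) ^ (1 - r) - 1))

noncomputable def g2 (a b σ r u : ℝ) : ℝ :=
  Gaux a b r u ^ 2 * (a * σ * (1 + u) ^ (-r)) ^ 2

noncomputable def Aaux (a b σ r x : ℝ) : ℝ := 1 + ∫ u in Ioc (0:ℝ) x, g2 a b σ r u

noncomputable def g3 (a b σ r u : ℝ) : ℝ :=
  a * b * (1 + u) ^ (-r) * Gaux a b r u ^ 2 * (Aaux a b σ r u)⁻¹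

noncomputable def Eaux (a b σ r x : ℝ) : ℝ := 1 + ∫ u in Ioc (0:ℝ) x, g3 a b σ r u

noncomputable def Naux (a b r x : ℝ) : ℝ := Gaux a b r x ^ 2 * (1 + x) ^ (-r)

noncomputable def Daux (a b r x : ℝ) : ℝ :=
  Gaux a b r x ^ 2 * (1 + x) ^ (-2*r) * (2*a*b - r * (1 + x) ^ (r-1))

lemma contAt_base (p : ℝ) {x : ℝ} (hx : -1 < x) :
    ContinuousAt (fun u : ℝ => (1 + u) ^ p) x :=
  ContinuousAt.rpow_const ((continuous_const.add continuous_id).continuousAt)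
    (Or.inl (show (1:ℝ) + x ≠ 0 by intro h; linarith))

lemma contAt_Gaux (a b r : ℝ) {x : ℝ} (hx : -1 < x) : ContinuousAt (Gaux a b r) x := by
  unfold Gaux
  exact Real.continuous_exp.continuousAt.comp
    (continuousAt_const.mul ((contAt_base (1-r) hx).sub continuousAt_const))

lemma contAt_g2 (a b σ r : ℝ) {x : ℝ} (hx : -1 < x) : ContinuousAt (g2 a b σ r) x := by
  unfold g2
  exact ((contAt_Gaux a b r hx).pow 2).mul ((continuousAt_const.mul (contAt_base (-r) hx)).pow 2)

lemma hasDerivAt_rpow1 (p : ℝ) {x : ℝ} (hx : -1 < x) :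
    HasDerivAt (fun x : ℝ => (1 + x) ^ p) (p * (1 + x) ^ (p - 1)) x := by
  have h1 : HasDerivAt (fun x : ℝ => 1 + x) 1 x := (hasDerivAt_id x).const_add 1
  have h2 := h1.rpow_const (p := p) (Or.inl (show (1:ℝ)+x ≠ 0 by intro h; linarith))
  simpa using h2

lemma integral_g1 (a b r : ℝ) (hr2 : r < 1) (y : ℝ) (hy : 0 ≤ y) :
    ∫ u in Ioc (0:ℝ) y, a * b * (1 + u) ^ (-r)
      = a * b / (1 - r) * ((1 + y) ^ (1 - r) - 1) := by
  rw [← intervalIntegral.integral_of_le hy]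
  have hder : ∀ x ∈ uIcc (0:ℝ) y,
      HasDerivAt (fun x => a*b/(1-r) * ((1+x) ^ (1-r))) (a*b*(1+x) ^ (-r)) x := by
    intro x hx
    rw [uIcc_of_le hy] at hx
    have h1x : (-1:ℝ) < x := by linarith [hx.1]
    have h3 := (hasDerivAt_rpow1 (1-r) h1x).const_mul (a*b/(1-r))
    refine h3.congr_deriv ?_
    rw [show (1:ℝ) - r - 1 = -r by ring]
    have : (1:ℝ) - r ≠ 0 := by intro h; linarith
    field_simp
  have hint : IntervalIntegrable (fun u : ℝ => a * b * (1+u) ^ (-r)) volume 0 y := by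
    apply ContinuousOn.intervalIntegrable
    intro u hu
    rw [uIcc_of_le hy] at hu
    exact (continuousAt_const.mul (contAt_base (-r) (by linarith [hu.1]))).continuousWithinAt
  rw [intervalIntegral.integral_eq_sub_of_hasDerivAt hder hint]
  norm_num
  ring

lemma g2_nonneg (a b σ r u : ℝ) : 0 ≤ g2 a b σ r u :=
  mul_nonneg (sq_nonneg _) (sq_nonneg _)

lemma Aaux_ge_one (a b σ r x : ℝ) : 1 ≤ Aaux a b σ r x := by
  unfold Aaux
  have : 0 ≤ ∫ u in Ioc (0:ℝ) x, g2 a b σ r u :=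
    setIntegral_nonneg measurableSet_Ioc fun u _ => g2_nonneg a b σ r u
  linarith

lemma Aaux_pos (a b σ r x : ℝ) : 0 < Aaux a b σ r x := lt_of_lt_of_le one_pos (Aaux_ge_one a b σ r x)

lemma g2_integrableOn (a b σ r : ℝ) {M : ℝ} (hM : 0 ≤ M) :
    IntegrableOn (g2 a b σ r) (Icc 0 M) volume := by
  apply ContinuousOn.integrableOn_compact isCompact_Icc
  exact fun u hu => (contAt_g2 a b σ r (by linarith [hu.1])).continuousWithinAt

lemma Aaux_contOn (a b σ r : ℝ) {M : ℝ} (hM : 0 ≤ M) :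
    ContinuousOn (Aaux a b σ r) (Icc 0 M) := by
  unfold Aaux
  exact continuousOn_const.add (intervalIntegral.continuousOn_primitive (g2_integrableOn a b σ r hM))

lemma Aaux_hasDerivAt (a b σ r : ℝ) {x : ℝ} (hx : 0 < x) :
    HasDerivAt (Aaux a b σ r) (g2 a b σ r x) x := by
  have hloc : (fun y => 1 + ∫ u in (0:ℝ)..y, g2 a b σ r u) =ᶠ[𝓝 x] Aaux a b σ r := by
    filter_upwards [Ioi_mem_nhds hx] with y hy
    rw [Aaux, intervalIntegral.integral_of_le (le_of_lt hy)]
  have hint : IntervalIntegrable (g2 a b σ r) volume 0 x := by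
    rw [intervalIntegrable_iff_integrableOn_Icc_of_le hx.le]
    exact g2_integrableOn a b σ r hx.le
  have hmeas : StronglyMeasurableAtFilter (g2 a b σ r) (𝓝 x) volume :=
    ⟨Ioi 0, Ioi_mem_nhds hx, (ContinuousOn.aestronglyMeasurable
      (fun u hu => (contAt_g2 a b σ r (by simp at hu; linarith)).continuousWithinAt)
      measurableSet_Ioi)⟩
  have h := (intervalIntegral.integral_hasDerivAt_right hint hmeas
    (contAt_g2 a b σ r (by linarith))).const_add 1
  exact h.congr_of_eventuallyEq hloc.symm

lemma Aaux_contAt (a b σ r : ℝ) {x : ℝ} (hx : 0 < x) : ContinuousAt (Aaux a b σ r) x :=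
  (Aaux_hasDerivAt a b σ r hx).continuousAt

lemma contAt_g3 (a b σ r : ℝ) {x : ℝ} (hx : 0 < x) : ContinuousAt (g3 a b σ r) x := by
  unfold g3
  exact ((continuousAt_const.mul (contAt_base (-r) (by linarith))).mul
    ((contAt_Gaux a b r (by linarith)).pow 2)).mul
    ((Aaux_contAt a b σ r hx).inv₀ (Aaux_pos a b σ r x).ne')

lemma g3_contOn_Icc (a b σ r : ℝ) {M : ℝ} (hM : 0 ≤ M) :
    ContinuousOn (g3 a b σ r) (Icc 0 M) := by
  unfold g3
  refine ContinuousOn.mul (ContinuousOn.mul ?_ ?_) ?_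
  · exact fun u hu => (continuousAt_const.mul (contAt_base (-r)
      (by linarith [hu.1]))).continuousWithinAt
  · exact fun u hu => ((contAt_Gaux a b r (by linarith [hu.1])).pow 2).continuousWithinAt
  · exact (Aaux_contOn a b σ r hM).inv₀ fun u _ => (Aaux_pos a b σ r u).ne'

lemma Eaux_hasDerivAt (a b σ r : ℝ) {x : ℝ} (hx : 0 < x) :
    HasDerivAt (Eaux a b σ r) (g3 a b σ r x) x := by
  have hloc : (fun y => 1 + ∫ u in (0:ℝ)..y, g3 a b σ r u) =ᶠ[𝓝 x] Eaux a b σ r := by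
    filter_upwards [Ioi_mem_nhds hx] with y hy
    rw [Eaux, intervalIntegral.integral_of_le (le_of_lt hy)]
  have hint : IntervalIntegrable (g3 a b σ r) volume 0 x := by
    rw [intervalIntegrable_iff_integrableOn_Icc_of_le hx.le]
    exact (g3_contOn_Icc a b σ r hx.le).integrableOn_compact isCompact_Icc
  have hmeas : StronglyMeasurableAtFilter (g3 a b σ r) (𝓝 x) volume :=
    ⟨Ioi 0, Ioi_mem_nhds hx, (ContinuousOn.aestronglyMeasurable
      (fun u hu => (contAt_g3 a b σ r (by simpa using hu)).continuousWithinAt)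
      measurableSet_Ioi)⟩
  have h := (intervalIntegral.integral_hasDerivAt_right hint hmeas
    (contAt_g3 a b σ r hx)).const_add 1
  exact h.congr_of_eventuallyEq hloc.symm

lemma Naux_hasDerivAt (a b r : ℝ) (hr2 : r < 1) {x : ℝ} (hx : 0 < x) :
    HasDerivAt (Naux a b r) (Daux a b r x) x := by
  have hy : (0:ℝ) < 1 + x := by linarith
  have hG : HasDerivAt (Gaux a b r) (Gaux a b r x * (a*b*(1+x) ^ (-r))) x := by
    have hP := (hasDerivAt_rpow1 (1-r) (by linarith)).sub_const 1
    have hP2 := (hP.const_mul (a*b/(1-r))).exp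
    have h1r : (1:ℝ) - r ≠ 0 := by intro h; linarith
    refine hP2.congr_deriv ?_
    unfold Gaux
    rw [show (1:ℝ) - r - 1 = -r by ring]
    field_simp
  have hprod := ((hG.pow 2).mul (hasDerivAt_rpow1 (-r) (by linarith)))
  refine hprod.congr_deriv ?_
  have e1 : (1+x) ^ (-r) * (1+x) ^ (-r) = (1+x) ^ (-2*r) := by
    rw [← Real.rpow_add hy]; congr 1; ring
  have e2 : (1+x) ^ (-2*r) * (1+x) ^ (r-1) = (1+x) ^ (-r-1) := by
    rw [← Real.rpow_add hy]; congr 1; ring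
  unfold Daux
  rw [show (-r:ℝ) - 1 = -r-1 by ring]
  simp only [Pi.pow_apply, Nat.cast_ofNat, show (2:ℕ) - 1 = 1 from rfl, pow_one]
  symm
  linear_combination (-(2*a*b*Gaux a b r x^2)) * e1 - (r * Gaux a b r x ^2) * e2

lemma W_lim (a b r : ℝ) (hr2 : r < 1) :
    Tendsto (fun x : ℝ => 2*a*b - r * (1+x) ^ (r-1)) atTop (𝓝 (2*a*b)) := by
  have h1 : Tendsto (fun x : ℝ => 1 + x) atTop atTop :=
    tendsto_atTop_add_const_left atTop 1 tendsto_id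
  have h2 : Tendsto (fun x : ℝ => (1+x) ^ (r-1)) atTop (𝓝 0) := by
    have := (tendsto_rpow_neg_atTop (by linarith : (0:ℝ) < 1 - r)).comp h1
    refine this.congr fun x => ?_
    simp only [Function.comp]
    congr 1
    ring
  have h3 : Tendsto (fun x : ℝ => 2*a*b - r * (1+x) ^ (r-1)) atTop (𝓝 (2*a*b - r*0)) :=
    tendsto_const_nhds.sub (h2.const_mul r)
  simpa using h3

lemma Naux_eq_exp (a b r x : ℝ) (hx : 0 < x) :
    Naux a b r x = Real.exp (2 * (a*b/(1-r) * ((1+x) ^ (1-r) - 1)) - r * Real.log (1+x)) := by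
  have hy : (0:ℝ) < 1 + x := by linarith
  unfold Naux Gaux
  rw [show ((1:ℝ)+x) ^ (-r) = Real.exp (Real.log (1+x) * (-r)) from Real.rpow_def_of_pos hy _,
    ← Real.exp_nat_mul, ← Real.exp_add]
  congr 1
  push_cast
  ring

lemma Naux_top (a b r : ℝ) (ha : 0 < a) (hb : 0 < b) (hr1 : 1/2 < r) (hr2 : r < 1) :
    Tendsto (Naux a b r) atTop atTop := by
  set c := a*b/(1-r) with hcdef
  have hc : 0 < c := by
    apply div_pos (by positivity); linarith
  have hr0 : (0:ℝ) < r := by linarith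
  have step1 : Tendsto (fun z : ℝ => c * z ^ (1-r) - 2*c) atTop atTop := by
    apply tendsto_atTop_add_const_right
    exact (tendsto_rpow_atTop (by linarith : (0:ℝ) < 1-r)).const_mul_atTop hc
  have step2 : ∀ᶠ z : ℝ in atTop,
      c * z ^ (1-r) - 2*c ≤ 2*c*(z ^ (1-r) - 1) - r * Real.log z := by
    have hlo := (isLittleO_log_rpow_atTop (by linarith : (0:ℝ) < 1-r)).def
      (by positivity : (0:ℝ) < c/r)
    filter_upwards [hlo, eventually_ge_atTop (1:ℝ)] with z hz hz1
    have hlog : 0 ≤ Real.log z := Real.log_nonneg hz1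
    have hzp : 0 ≤ z ^ (1-r) := Real.rpow_nonneg (by linarith) _
    rw [Real.norm_eq_abs, Real.norm_eq_abs, abs_of_nonneg hlog, abs_of_nonneg hzp] at hz
    have : r * Real.log z ≤ c * z ^ (1-r) := by
      have := mul_le_mul_of_nonneg_left hz hr0.le
      calc r * Real.log z ≤ r * (c/r * z ^ (1-r)) := this
        _ = c * z ^ (1-r) := by field_simp
    linarith
  have step3 : Tendsto (fun z : ℝ => 2*c*(z ^ (1-r) - 1) - r * Real.log z) atTop atTop :=
    tendsto_atTop_mono' atTop step2 step1
  have step4 := step3.comp (tendsto_atTop_add_const_left atTop 1 tendsto_id :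
    Tendsto (fun x : ℝ => 1 + x) atTop atTop)
  have step5 := Real.tendsto_exp_atTop.comp step4
  refine step5.congr' ?_
  filter_upwards [eventually_gt_atTop (0:ℝ)] with x hx
  simp only [Function.comp]
  rw [Naux_eq_exp a b r x hx]
  congr 1
  ring

lemma Aaux_div_Naux (a b σ r : ℝ) (ha : 0 < a) (hb : 0 < b) (hσ : 0 < σ)
    (hr1 : 1/2 < r) (hr2 : r < 1) :
    Tendsto (fun x => Aaux a b σ r x / Naux a b r x) atTop (𝓝 (a^2*σ^2/(2*a*b))) := by
  have hr0 : (0:ℝ) < r := by linarith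
  have hWlim := W_lim a b r hr2
  have hWpos : ∀ᶠ x : ℝ in atTop, 0 < 2*a*b - r * (1+x) ^ (r-1) :=
    hWlim.eventually (eventually_gt_nhds (mul_pos (mul_pos two_pos ha) hb))
  obtain ⟨x₀, hx₀⟩ := eventually_atTop.1 (hWpos.and (eventually_gt_atTop 0))
  have hx₀pos : 0 < x₀ := (hx₀ x₀ le_rfl).2
  refine lhopital_aux (A' := g2 a b σ r) (N' := Daux a b r) (x₁ := x₀)
    (fun x hx => Aaux_hasDerivAt a b σ r (hx₀ x hx.le).2)
    (fun x hx => Naux_hasDerivAt a b r hr2 (hx₀ x hx.le).2)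
    (fun x hx => (contAt_g2 a b σ r (by simp at hx; linarith [(hx₀ x hx.le).2])).continuousWithinAt)
    ?_ ?_ (Naux_top a b r ha hb hr1 hr2) ?_
  · intro x hx
    simp only [mem_Ioi] at hx
    have hxp : 0 < x := (hx₀ x hx.le).2
    unfold Daux
    refine ContinuousWithinAt.mul (ContinuousWithinAt.mul ?_ ?_) ?_
    · exact (((contAt_Gaux a b r (by linarith)).pow 2)).continuousWithinAt
    · exact (contAt_base (-2*r) (by linarith)).continuousWithinAt
    · exact (continuousAt_const.sub (continuousAt_const.mul
        (contAt_base (r-1) (by linarith)))).continuousWithinAt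
  · intro x hx
    have hxp : 0 < x := (hx₀ x hx.le).2
    have hW := (hx₀ x hx.le).1
    have hy : (0:ℝ) < 1 + x := by linarith
    unfold Daux
    have h1 : 0 < Gaux a b r x ^ 2 := pow_pos (Real.exp_pos _) 2
    have h2 : 0 < (1+x) ^ (-2*r) := Real.rpow_pos_of_pos hy _
    exact mul_pos (mul_pos h1 h2) hW
  · have hptw : ∀ᶠ x : ℝ in atTop,
        a^2*σ^2 / (2*a*b - r * (1+x) ^ (r-1)) = g2 a b σ r x / Daux a b r x := by
      filter_upwards [eventually_ge_atTop x₀] with x hx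
      have hxp : 0 < x := (hx₀ x hx).2
      have hy : (0:ℝ) < 1 + x := by linarith
      have e1 : ((1+x) ^ (-r)) ^ (2:ℕ) = (1+x) ^ (-2*r) := by
        rw [← Real.rpow_natCast ((1+x) ^ (-r)) 2, ← Real.rpow_mul hy.le]
        congr 1
        push_cast
        ring
      have hfac : 0 < Gaux a b r x ^ 2 * (1+x) ^ (-2*r) :=
        mul_pos (pow_pos (Real.exp_pos _) 2) (Real.rpow_pos_of_pos hy _)
      unfold g2 Daux
      rw [mul_pow, e1.symm]
      rw [show Gaux a b r x ^ 2 * ((a*σ) ^ 2 * ((1+x) ^ (-r)) ^ 2)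
          = (Gaux a b r x ^ 2 * ((1+x) ^ (-r)) ^ 2) * (a^2*σ^2) by ring,
        show Gaux a b r x ^ 2 * ((1+x) ^ (-r)) ^ 2 * (2*a*b - r * (1+x) ^ (r-1))
          = (Gaux a b r x ^ 2 * ((1+x) ^ (-r)) ^ 2) * (2*a*b - r * (1+x) ^ (r-1)) by ring]
      rw [mul_div_mul_left _ _ (by rw [e1]; exact hfac.ne')]
    have hlim : Tendsto (fun x : ℝ => a^2*σ^2 / (2*a*b - r * (1+x) ^ (r-1))) atTop
        (𝓝 (a^2*σ^2/(2*a*b))) :=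
      tendsto_const_nhds.div hWlim (mul_pos (mul_pos two_pos ha) hb).ne'
    exact hlim.congr' hptw

lemma part1_real (a b σ r : ℝ) (ha : 0 < a) (hb : 0 < b) (hσ : 0 < σ)
    (hr1 : 1/2 < r) (hr2 : r < 1) :
    Tendsto (fun x => Gaux a b r x ^ 2 / (Aaux a b σ r x * (1+x) ^ r)) atTop
      (𝓝 (2*b/(a*σ^2))) := by
  have hne : a^2*σ^2/(2*a*b) ≠ 0 := by
    apply div_ne_zero (by positivity) (mul_pos (mul_pos two_pos ha) hb).ne'
  have h := (Aaux_div_Naux a b σ r ha hb hσ hr1 hr2).inv₀ hne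
  have hval : (a^2*σ^2/(2*a*b))⁻¹ = 2*b/(a*σ^2) := by
    rw [inv_div]
    rw [div_eq_div_iff (by positivity) (by positivity)]
    ring
  rw [hval] at h
  refine h.congr' ?_
  filter_upwards [eventually_ge_atTop (0:ℝ)] with x hx
  have hy : (0:ℝ) < 1 + x := by linarith
  have hA := Aaux_pos a b σ r x
  have hrp : (0:ℝ) < (1+x) ^ r := Real.rpow_pos_of_pos hy r
  rw [inv_div]
  unfold Naux
  rw [Real.rpow_neg hy.le]
  field_simp

lemma part2_real (a b σ r : ℝ) (ha : 0 < a) (hb : 0 < b) (hσ : 0 < σ)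
    (hr1 : 1/2 < r) (hr2 : r < 1) :
    Tendsto (fun x => Eaux a b σ r x / (1 + x)) atTop (𝓝 (2*b^2/σ^2)) := by
  have hne : a^2*σ^2/(2*a*b) ≠ 0 := by
    apply div_ne_zero (by positivity) (mul_pos (mul_pos two_pos ha) hb).ne'
  have hinv := (Aaux_div_Naux a b σ r ha hb hσ hr1 hr2).inv₀ hne
  have hg3 : Tendsto (g3 a b σ r) atTop (𝓝 (2*b^2/σ^2)) := by
    have h2 := hinv.const_mul (a*b)
    have hval : a*b * (a^2*σ^2/(2*a*b))⁻¹ = 2*b^2/σ^2 := by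
      rw [inv_div]
      rw [show a*b * (2*a*b/(a^2*σ^2)) = (2*a^2*b^2)/(a^2*σ^2) by ring]
      rw [div_eq_div_iff (by positivity) (by positivity)]
      ring
    rw [hval] at h2
    refine h2.congr fun x => ?_
    rw [inv_div]
    unfold g3 Naux
    ring
  refine lhopital_aux (A' := g3 a b σ r) (N' := fun _ => (1:ℝ)) (x₁ := 0)
    (fun x hx => Eaux_hasDerivAt a b σ r hx)
    (fun x _ => (hasDerivAt_id x).const_add 1)
    (fun x hx => (contAt_g3 a b σ r hx).continuousWithinAt)
    continuousOn_const (fun _ _ => one_pos)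
    (tendsto_atTop_add_const_left atTop 1 tendsto_id) ?_
  simpa using hg3


lemma subK (K : StieltjesFunction ℝ) (hKc : Continuous fun x => K x) (hK0 : K 0 = 0)
    (hKtop : Tendsto (fun t => K t) atTop atTop) (t : ℝ) (ht : 0 ≤ t) (g : ℝ → ℝ)
    (hg : AEStronglyMeasurable g (volume.restrict (Ioc 0 (K t)))) :
    ∫ s in Ioc 0 t, g (K s) ∂K.measure = ∫ u in Ioc 0 (K t), g u := by
  have h := mapK K hKc hK0 hKtop t ht
  rw [← h] at hg
  rw [← MeasureTheory.integral_map hKc.measurable.aemeasurable hg, h]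

lemma Gam_eq (K : StieltjesFunction ℝ) (hKc : Continuous fun x => K x) (hK0 : K 0 = 0)
    (hKtop : Tendsto (fun t => K t) atTop atTop) (a b r : ℝ) (hr2 : r < 1)
    (t : ℝ) (ht : 0 ≤ t) :
    Gam K (fun s => a * b * (1 + K s) ^ (-r)) t = Gaux a b r (K t) := by
  have hKt : 0 ≤ K t := hK0 ▸ K.mono ht
  have hmeas : AEStronglyMeasurable (fun u : ℝ => a * b * (1 + u) ^ (-r))
      (volume.restrict (Ioc 0 (K t))) :=
    ContinuousOn.aestronglyMeasurable (fun u hu =>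
      (continuousAt_const.mul (contAt_base (-r) (by linarith [hu.1]))).continuousWithinAt)
      measurableSet_Ioc
  unfold Gam Gaux
  congr 1
  rw [subK K hKc hK0 hKtop t ht (fun u => a * b * (1 + u) ^ (-r)) hmeas,
    integral_g1 a b r hr2 (K t) hKt]

lemma angL_eq (K : StieltjesFunction ℝ) (hKc : Continuous fun x => K x) (hK0 : K 0 = 0)
    (hKtop : Tendsto (fun t => K t) atTop atTop) (a b σ r : ℝ) (hr2 : r < 1)
    (t : ℝ) (ht : 0 ≤ t) :
    angL K (fun s => a * b * (1 + K s) ^ (-r)) (fun s => a * σ * (1 + K s) ^ (-r)) t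
      = Aaux a b σ r (K t) := by
  have hKt : 0 ≤ K t := hK0 ▸ K.mono ht
  have hmeas : AEStronglyMeasurable (g2 a b σ r) (volume.restrict (Ioc 0 (K t))) :=
    ContinuousOn.aestronglyMeasurable (fun u hu =>
      (contAt_g2 a b σ r (by linarith [hu.1])).continuousWithinAt) measurableSet_Ioc
  unfold angL Aaux
  congr 1
  have h1 : EqOn (fun s => (Gam K (fun s => a * b * (1 + K s) ^ (-r)) s) ^ 2 *
      ((fun s => a * σ * (1 + K s) ^ (-r)) s) ^ 2) (fun s => g2 a b σ r (K s)) (Ioc 0 t) := by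
    intro s hs
    simp only
    rw [Gam_eq K hKc hK0 hKtop a b r hr2 s hs.1.le]
    rfl
  rw [MeasureTheory.setIntegral_congr_fun measurableSet_Ioc h1]
  exact subK K hKc hK0 hKtop t ht (g2 a b σ r) hmeas

lemma eps_eq (K : StieltjesFunction ℝ) (hKc : Continuous fun x => K x) (hK0 : K 0 = 0)
    (hKtop : Tendsto (fun t => K t) atTop atTop) (a b σ r : ℝ) (hr2 : r < 1)
    (t : ℝ) (ht : 0 ≤ t) :
    epsOne K (fun s => a * b * (1 + K s) ^ (-r)) (fun s => a * σ * (1 + K s) ^ (-r)) t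
      = Eaux a b σ r (K t) := by
  have hKt : 0 ≤ K t := hK0 ▸ K.mono ht
  have hmeas : AEStronglyMeasurable (g3 a b σ r) (volume.restrict (Ioc 0 (K t))) :=
    ContinuousOn.aestronglyMeasurable (fun u hu =>
      (contAt_g3 a b σ r hu.1).continuousWithinAt) measurableSet_Ioc
  unfold epsOne Eaux
  congr 1
  have h1 : EqOn (fun s => (fun s => a * b * (1 + K s) ^ (-r)) s *
      (Gam K (fun s => a * b * (1 + K s) ^ (-r)) s) ^ 2 *
      (angL K (fun s => a * b * (1 + K s) ^ (-r)) (fun s => a * σ * (1 + K s) ^ (-r)) s)⁻¹)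
      (fun s => g3 a b σ r (K s)) (Ioc 0 t) := by
    intro s hs
    simp only
    rw [Gam_eq K hKc hK0 hKtop a b r hr2 s hs.1.le,
      angL_eq K hKc hK0 hKtop a b σ r hr2 s hs.1.le]
    rfl
  rw [MeasureTheory.setIntegral_congr_fun measurableSet_Ioc h1]
  exact subK K hKc hK0 hKtop t ht (g3 a b σ r) hmeas


/-- Example 2 of Section 3 ("linear procedure with slowly varying gains"): with
`β_t = a·b·(1+K_t)^{−r}`, `ℓ_t = a·σ·(1+K_t)^{−r}` for `a, b, σ > 0`, `1/2 < r < 1` and `K`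
continuous nondecreasing with `K_0 = 0`, `K_t → ∞`, one has
(i) `Γ_t² / (⟨L⟩_t (1+K_t)^r) → 2b/(aσ²)` and (ii) `ε_t^{(1)} / (1+K_t) → 2b²/σ²`. -/
theorem slowly_varying_gain_limits (K : StieltjesFunction ℝ)
    (hKc : Continuous fun x => K x) (hK0 : K 0 = 0)
    (hKtop : Tendsto (fun t => K t) atTop atTop)
    (a b σ r : ℝ) (ha : 0 < a) (hb : 0 < b) (hσ : 0 < σ) (hr1 : 1 / 2 < r) (hr2 : r < 1) :
    Tendsto (fun t =>
        (Gam K (fun s => a * b * (1 + K s) ^ (-r)) t) ^ 2 /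
          (angL K (fun s => a * b * (1 + K s) ^ (-r))
              (fun s => a * σ * (1 + K s) ^ (-r)) t * (1 + K t) ^ r))
      atTop (𝓝 (2 * b / (a * σ ^ 2))) ∧
    Tendsto (fun t =>
        epsOne K (fun s => a * b * (1 + K s) ^ (-r))
            (fun s => a * σ * (1 + K s) ^ (-r)) t / (1 + K t))
      atTop (𝓝 (2 * b ^ 2 / σ ^ 2)) := by
  constructor
  · have hcomp := (part1_real a b σ r ha hb hσ hr1 hr2).comp hKtop
    refine hcomp.congr' ?_
    filter_upwards [eventually_ge_atTop (0:ℝ)] with t ht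
    simp only [Function.comp]
    rw [Gam_eq K hKc hK0 hKtop a b r hr2 t ht, angL_eq K hKc hK0 hKtop a b σ r hr2 t ht]
  · have hcomp := (part2_real a b σ r ha hb hσ hr1 hr2).comp hKtop
    refine hcomp.congr' ?_
    filter_upwards [eventually_ge_atTop (0:ℝ)] with t ht
    simp only [Function.comp]
    rw [eps_eq K hKc hK0 hKtop a b σ r hr2 t ht]
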